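/- For all x, y ≥ 0 with x + y ≤ 1, ν(x + y) ≤ ν(x) + ν(y), where ν(x) = Σ_{d≥1} d·ε_d(x)·2^{-d} (subadditivity of the new entropy function). -/

import Mathlib

noncomputable def epsBit (d : ℕ) (x : ℝ) : ℝ := ((⌊2 ^ d * x⌋ % 2 : ℤ) : ℝ)

noncomputable def nu (x : ℝ) : ℝ := ∑' d : ℕ, (d : ℝ) * epsBit d x / 2 ^ d

namespace NuAux

noncomputable def f (x : ℝ) (k : ℕ) : ℝ := Int.fract (2 ^ k * x) / 2 ^ k

noncomputable def g (x : ℝ) (k : ℕ) : ℝ := (k : ℝ) * Int.fract (2 ^ k * x) / 2 ^ k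

lemma floor_two_mul (y : ℝ) : 2 * ⌊y⌋ ≤ ⌊2 * y⌋ ∧ ⌊2 * y⌋ ≤ 2 * ⌊y⌋ + 1 := by
  constructor
  · rw [Int.le_floor]
    push_cast
    nlinarith [Int.floor_le y]
  · rw [Int.floor_le_iff]
    push_cast
    nlinarith [Int.lt_floor_add_one y]

lemma epsBit_succ (d : ℕ) (x : ℝ) :
    epsBit (d + 1) x = ((⌊2 ^ (d + 1) * x⌋ : ℤ) : ℝ) - 2 * ((⌊2 ^ d * x⌋ : ℤ) : ℝ) := by
  have h := floor_two_mul (2 ^ d * x)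
  have h2 : (2 : ℝ) * (2 ^ d * x) = 2 ^ (d + 1) * x := by ring
  rw [h2] at h
  have : ⌊2 ^ (d + 1) * x⌋ % 2 = ⌊2 ^ (d + 1) * x⌋ - 2 * ⌊2 ^ d * x⌋ := by omega
  rw [epsBit, this]
  push_cast
  ring

lemma term_succ (d : ℕ) (x : ℝ) :
    ((d + 1 : ℕ) : ℝ) * epsBit (d + 1) x / 2 ^ (d + 1) = f x d + g x d - g x (d + 1) := by
  rw [epsBit_succ]
  unfold f g
  simp only [← Int.self_sub_floor]
  generalize ((⌊(2:ℝ) ^ (d + 1) * x⌋ : ℤ) : ℝ) = B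
  generalize ((⌊(2:ℝ) ^ d * x⌋ : ℤ) : ℝ) = A
  have hd : (2 : ℝ) ^ d ≠ 0 := by positivity
  have hd1 : (2 : ℝ) ^ (d + 1) ≠ 0 := by positivity
  push_cast
  field_simp
  ring

lemma partial_sum (x : ℝ) (N : ℕ) :
    ∑ d ∈ Finset.range (N + 1), (d : ℝ) * epsBit d x / 2 ^ d
      = (∑ k ∈ Finset.range N, f x k) - g x N := by
  induction N with
  | zero => simp [g]
  | succ N ih =>
      rw [Finset.sum_range_succ, ih, Finset.sum_range_succ, term_succ]
      ring

lemma summable_f (x : ℝ) : Summable (f x) := by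
  apply Summable.of_nonneg_of_le
    (fun k => div_nonneg (Int.fract_nonneg _) (by positivity))
    (fun k => ?_) (summable_geometric_two)
  rw [div_pow, one_pow]
  gcongr
  exact (Int.fract_lt_one _).le

lemma tendsto_g (x : ℝ) : Filter.Tendsto (g x) Filter.atTop (nhds 0) := by
  have hs : Summable (fun n : ℕ => (n : ℝ) * (1 / 2 : ℝ) ^ n) := by
    simpa using summable_pow_mul_geometric_of_norm_lt_one (R := ℝ) 1
      (r := (1/2 : ℝ)) (by rw [Real.norm_eq_abs, abs_of_pos] <;> norm_num)
  have h0 : Filter.Tendsto (fun n : ℕ => (n : ℝ) * (1 / 2 : ℝ) ^ n)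
      Filter.atTop (nhds 0) := hs.tendsto_atTop_zero
  apply squeeze_zero (fun n => div_nonneg (mul_nonneg (Nat.cast_nonneg _) (Int.fract_nonneg _)) (by positivity)) (fun n => ?_) h0
  rw [div_le_iff₀ (by positivity), div_pow, one_pow]
  have h1 : Int.fract (2 ^ n * x) ≤ 1 := (Int.fract_lt_one _).le
  have h2 : (0:ℝ) ≤ Int.fract (2 ^ n * x) := Int.fract_nonneg _
  have h3 : (0:ℝ) < 2 ^ n := by positivity
  have : (1:ℝ) / 2 ^ n * 2 ^ n = 1 := by field_simp
  nlinarith [Nat.cast_nonneg (α := ℝ) n]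

lemma nu_eq (x : ℝ) : nu x = ∑' k : ℕ, f x k := by
  have hnn : ∀ d : ℕ, 0 ≤ (d : ℝ) * epsBit d x / 2 ^ d := by
    intro d
    have h : (0:ℤ) ≤ ⌊(2:ℝ) ^ d * x⌋ % 2 := Int.emod_nonneg _ (by norm_num)
    have h0 : (0:ℝ) ≤ epsBit d x := by unfold epsBit; exact_mod_cast h
    positivity
  have hsum : HasSum (fun d : ℕ => (d : ℝ) * epsBit d x / 2 ^ d) (∑' k : ℕ, f x k) := by
    rw [hasSum_iff_tendsto_nat_of_nonneg hnn]
    rw [← Filter.tendsto_add_atTop_iff_nat 1]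
    have heq : (fun N => ∑ d ∈ Finset.range (N + 1), (d : ℝ) * epsBit d x / 2 ^ d)
        = fun N => (∑ k ∈ Finset.range N, f x k) - g x N := by
      funext N; exact partial_sum x N
    rw [heq]
    have := ((summable_f x).hasSum.tendsto_sum_nat).sub (tendsto_g x)
    simpa using this
  exact hsum.tsum_eq

end NuAux

theorem nu_subadditive :
    ∀ x y : ℝ, 0 ≤ x → 0 ≤ y → x + y ≤ 1 → nu (x + y) ≤ nu x + nu y := by
  intro x y _ _ _
  rw [NuAux.nu_eq, NuAux.nu_eq, NuAux.nu_eq, ← Summable.tsum_add (NuAux.summable_f x) (NuAux.summable_f y)]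
  apply Summable.tsum_le_tsum _ (NuAux.summable_f _) ((NuAux.summable_f x).add (NuAux.summable_f y))
  intro k
  unfold NuAux.f
  rw [← add_div, div_le_div_iff₀ (by positivity) (by positivity)]
  have h : Int.fract (2 ^ k * (x + y)) ≤ Int.fract (2 ^ k * x) + Int.fract (2 ^ k * y) := by
    have := Int.fract_add_le (2 ^ k * x) (2 ^ k * y)
    rw [← mul_add] at this
    exact this
  nlinarith [pow_pos (by norm_num : (0:ℝ) < 2) k]
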